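/- The rational function f(x,y,z) = z²·(x²+y²z²−y³)/(x²+y²z²+y⁴) on ℝ³ extends to a continuous function f^c on all of ℝ³ with f^c(0,0,z) = z². -/

import Mathlib

noncomputable def gAux : ℝ × ℝ × ℝ → ℝ := fun p =>
  p.2.1 * (1 + p.2.1) *
    (p.2.1 ^ 2 * p.2.2 ^ 2 / (p.1 ^ 2 + p.2.1 ^ 2 * p.2.2 ^ 2 + p.2.1 ^ 4))

lemma denom_pos {x y : ℝ} (h : ¬(x = 0 ∧ y = 0)) (z : ℝ) :
    0 < x ^ 2 + y ^ 2 * z ^ 2 + y ^ 4 := by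
  rcases not_and_or.mp h with hx | hy
  · have : 0 < x ^ 2 := by positivity
    nlinarith [sq_nonneg (y * z), sq_nonneg (y ^ 2)]
  · have : 0 < y ^ 4 := by positivity
    nlinarith [sq_nonneg x, sq_nonneg (y * z)]

lemma gAux_bound (p : ℝ × ℝ × ℝ) : ‖gAux p‖ ≤ |p.2.1 * (1 + p.2.1)| := by
  obtain ⟨x, y, z⟩ := p
  simp only [gAux, Real.norm_eq_abs]
  rw [abs_mul]
  have hq : |y ^ 2 * z ^ 2 / (x ^ 2 + y ^ 2 * z ^ 2 + y ^ 4)| ≤ 1 := by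
    rcases eq_or_lt_of_le (by positivity : (0:ℝ) ≤ x ^ 2 + y ^ 2 * z ^ 2 + y ^ 4) with hD | hD
    · simp [← hD]
    · rw [abs_of_nonneg (by positivity)]
      rw [div_le_one hD]
      nlinarith [sq_nonneg x, sq_nonneg (y ^ 2)]
  calc |y * (1 + y)| * |y ^ 2 * z ^ 2 / (x ^ 2 + y ^ 2 * z ^ 2 + y ^ 4)|
      ≤ |y * (1 + y)| * 1 := by
        exact mul_le_mul_of_nonneg_left hq (abs_nonneg _)
    _ = |y * (1 + y)| := mul_one _

lemma gAux_cont : Continuous gAux := by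
  rw [continuous_iff_continuousAt]
  intro p
  by_cases h : p.1 = 0 ∧ p.2.1 = 0
  · -- squeeze argument at the z-axis
    have hval : gAux p = 0 := by
      obtain ⟨x, y, z⟩ := p
      obtain ⟨hx, hy⟩ := h
      simp_all [gAux]
    rw [ContinuousAt, hval]
    have habs : Filter.Tendsto (fun q : ℝ × ℝ × ℝ => |q.2.1 * (1 + q.2.1)|)
        (nhds p) (nhds 0) := by
      have hc : Continuous (fun q : ℝ × ℝ × ℝ => |q.2.1 * (1 + q.2.1)|) := by
        fun_prop
      have := hc.tendsto p
      simpa [h.2] using this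
    exact squeeze_zero_norm gAux_bound habs
  · have hD : p.1 ^ 2 + p.2.1 ^ 2 * p.2.2 ^ 2 + p.2.1 ^ 4 ≠ 0 :=
      ne_of_gt (denom_pos h p.2.2)
    apply ContinuousAt.mul
    · fun_prop
    · exact ContinuousAt.div (by fun_prop) (by fun_prop) hD

theorem stmt5 : ∃ f : ℝ × ℝ × ℝ → ℝ, Continuous f ∧
    (∀ x y z : ℝ, ¬ (x = 0 ∧ y = 0) →
      f (x, y, z) =
        z ^ 2 * (x ^ 2 + y ^ 2 * z ^ 2 - y ^ 3) / (x ^ 2 + y ^ 2 * z ^ 2 + y ^ 4)) ∧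
    ∀ z : ℝ, f (0, 0, z) = z ^ 2 := by
  refine ⟨fun p => p.2.2 ^ 2 - gAux p, ?_, ?_, ?_⟩
  · exact (Continuous.pow (by fun_prop) 2).sub gAux_cont
  · intro x y z h
    have hD := denom_pos h z
    simp only [gAux]
    have hD2 : x ^ 2 + z ^ 2 * y ^ 2 + y ^ 4 ≠ 0 := by linarith [mul_comm (z ^ 2) (y ^ 2)]
    field_simp
    ring
  · intro z
    simp [gAux]
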